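/- Let B : ℕ × ℕ → ℝ be defined by B(n, 0) = 0 for all n, B(0, i) = 0 for all i, and B(n, i) = ∑_{j=1}^{n} (binom(n, j)/2ⁿ) · (1 + B(j, i−1)) for n ≥ 1 and i ≥ 1. Let G₁, …, Gₙ be independent ℕ-valued random variables, each geometrically distributed with parameter 1/2, i.e., P(Gⱼ = k) = 2^{−(k+1)} for every k ∈ ℕ. Then for all n ≥ 1 and all i ∈ ℕ, B(n, i) equals the expected value of min(max(G₁, …, Gₙ), i). -/

import Mathlib

open MeasureTheory ProbabilityTheory

-- natural number min as sum of indicators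
lemma min_eq_sum_aux (m i : ℕ) :
    min m i = ∑ t ∈ Finset.range i, if t + 1 ≤ m then 1 else 0 := by
  induction i with
  | zero => simp
  | succ i ih => rw [Finset.sum_range_succ, ← ih]; split_ifs with h <;> omega

-- binomial sum
lemma binom_sum_aux (n : ℕ) (x : ℝ) :
    ∑ j ∈ Finset.Icc 1 n, ((n.choose j : ℝ) / 2 ^ n) * x ^ j
      = ((1 + x) / 2) ^ n - (2⁻¹ : ℝ) ^ n := by
  have h : Finset.range (n + 1) = insert 0 (Finset.Icc 1 n) := by
    ext j; simp [Finset.mem_range, Finset.mem_Icc]; omega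
  have hb := add_pow x 1 n
  rw [h, Finset.sum_insert (by simp)] at hb
  simp only [pow_zero, one_pow, one_mul, mul_one, Nat.choose_zero_right, Nat.cast_one] at hb
  have key : ∑ j ∈ Finset.Icc 1 n, (n.choose j : ℝ) * x ^ j = (x + 1) ^ n - 1 := by
    have : ∑ j ∈ Finset.Icc 1 n, (n.choose j : ℝ) * x ^ j
        = ∑ j ∈ Finset.Icc 1 n, x ^ j * (n.choose j : ℝ) := by
      apply Finset.sum_congr rfl; intro j hj; ring
    rw [this]; linarith [hb]
  have h2 : (2 : ℝ) ^ n ≠ 0 := by positivity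
  have : ∑ j ∈ Finset.Icc 1 n, ((n.choose j : ℝ) / 2 ^ n) * x ^ j
      = (∑ j ∈ Finset.Icc 1 n, (n.choose j : ℝ) * x ^ j) / 2 ^ n := by
    rw [Finset.sum_div]; apply Finset.sum_congr rfl; intro j hj; ring
  rw [this, key, div_pow, inv_pow]
  field_simp
  ring

lemma B_closed (B : ℕ → ℕ → ℝ) (h0 : ∀ n, B n 0 = 0)
    (hrec : ∀ n i, 1 ≤ n → 1 ≤ i →
      B n i = ∑ j ∈ Finset.Icc 1 n, ((n.choose j : ℝ) / 2 ^ n) * (1 + B j (i - 1))) :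
    ∀ i n, 1 ≤ n →
      B n i = ∑ t ∈ Finset.range i, (1 - (1 - (2⁻¹ : ℝ) ^ (t + 1)) ^ n) := by
  intro i
  induction i with
  | zero => intro n _; simp [h0]
  | succ i ih =>
    intro n hn
    rw [hrec n (i + 1) hn (by omega)]
    simp only [Nat.add_sub_cancel]
    have step : ∀ j ∈ Finset.Icc 1 n, ((n.choose j : ℝ) / 2 ^ n) * (1 + B j i)
        = ((n.choose j : ℝ) / 2 ^ n)
          + ∑ t ∈ Finset.range i,
              (((n.choose j : ℝ) / 2 ^ n) * (1 - (1 - (2⁻¹ : ℝ) ^ (t + 1)) ^ j)) := by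
      intro j hj
      rw [ih j (Finset.mem_Icc.mp hj).1, mul_add, mul_one, Finset.mul_sum]
    rw [Finset.sum_congr rfl step, Finset.sum_add_distrib, Finset.sum_comm]
    have hc : ∑ j ∈ Finset.Icc 1 n, ((n.choose j : ℝ) / 2 ^ n) = 1 - (2⁻¹ : ℝ) ^ n := by
      have := binom_sum_aux n 1
      simpa using this
    have ht : ∀ t, ∑ j ∈ Finset.Icc 1 n,
          ((n.choose j : ℝ) / 2 ^ n) * (1 - (1 - (2⁻¹ : ℝ) ^ (t + 1)) ^ j)
        = 1 - (1 - (2⁻¹ : ℝ) ^ (t + 2)) ^ n := by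
      intro t
      have expand : ∀ j ∈ Finset.Icc 1 n,
          ((n.choose j : ℝ) / 2 ^ n) * (1 - (1 - (2⁻¹ : ℝ) ^ (t + 1)) ^ j)
          = ((n.choose j : ℝ) / 2 ^ n)
            - ((n.choose j : ℝ) / 2 ^ n) * (1 - (2⁻¹ : ℝ) ^ (t + 1)) ^ j := by
        intro j hj; ring
      rw [Finset.sum_congr rfl expand, Finset.sum_sub_distrib, hc,
        binom_sum_aux n (1 - (2⁻¹ : ℝ) ^ (t + 1))]
      have h2 : (1 + (1 - (2⁻¹ : ℝ) ^ (t + 1))) / 2 = 1 - (2⁻¹ : ℝ) ^ (t + 2) := by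
        rw [pow_succ]; ring
      rw [h2]; ring
    rw [Finset.sum_congr rfl (fun t _ => ht t), hc, Finset.sum_range_succ']
    norm_num
    ring

lemma geom_sum_ennreal (t : ℕ) :
    ∑ k ∈ Finset.range t, (2 : ENNReal)⁻¹ ^ (k + 1) + (2 : ENNReal)⁻¹ ^ t = 1 := by
  induction t with
  | zero => simp
  | succ t ih =>
    rw [Finset.sum_range_succ, add_assoc]
    have h2 : (2 : ENNReal)⁻¹ ^ (t + 1) + (2 : ENNReal)⁻¹ ^ (t + 1) = (2 : ENNReal)⁻¹ ^ t := by
      rw [pow_succ, ← mul_add, ENNReal.inv_two_add_inv_two, mul_one]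
    rw [h2, ih]

theorem maxBinom_eq_expected_min_max_geometric {Ω : Type*} [MeasurableSpace Ω]
    (μ : Measure Ω) [IsProbabilityMeasure μ]
    (B : ℕ → ℕ → ℝ)
    (h0 : ∀ n, B n 0 = 0) (h0' : ∀ i, B 0 i = 0)
    (hrec : ∀ n i, 1 ≤ n → 1 ≤ i →
      B n i = ∑ j ∈ Finset.Icc 1 n, ((n.choose j : ℝ) / 2 ^ n) * (1 + B j (i - 1)))
    (n : ℕ) (hn : 1 ≤ n) (G : Fin n → Ω → ℕ)
    (hmeas : ∀ j, Measurable (G j))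
    (hindep : iIndepFun G μ)
    (hgeo : ∀ (j : Fin n) (k : ℕ), μ {ω | G j ω = k} = (2 : ENNReal)⁻¹ ^ (k + 1)) :
    ∀ i : ℕ, B n i = ∫ ω, ((min (Finset.univ.sup fun j => G j ω) i : ℕ) : ℝ) ∂μ := by
  intro i
  let M : Ω → ℕ := fun ω => Finset.univ.sup fun j => G j ω
  -- CDF of each G j
  have hcdf : ∀ (j : Fin n) (t : ℕ),
      μ (G j ⁻¹' Set.Iio t) = 1 - (2 : ENNReal)⁻¹ ^ t := by
    intro j t
    have hset : G j ⁻¹' Set.Iio t = ⋃ k ∈ Finset.range t, {ω | G j ω = k} := by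
      ext ω; simp
    rw [hset, measure_biUnion_finset]
    · rw [Finset.sum_congr rfl fun k _ => hgeo j k]
      exact ENNReal.eq_sub_of_add_eq
        (ENNReal.pow_ne_top (ENNReal.inv_ne_top.mpr two_ne_zero)) (geom_sum_ennreal t)
    · intro a _ b _ hab
      apply Set.disjoint_left.mpr
      intro ω h1 h2
      exact hab ((h1 : G j ω = a) ▸ (h2 : G j ω = b))
    · exact fun k _ => hmeas j (measurableSet_singleton k)
  -- product formula
  have hprod : ∀ t : ℕ,
      μ (⋂ j ∈ Finset.univ, G j ⁻¹' Set.Iio t) = (1 - (2 : ENNReal)⁻¹ ^ t) ^ n := by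
    intro t
    rw [hindep.measure_inter_preimage_eq_mul Finset.univ
      (sets := fun _ => Set.Iio t) (fun _ _ => measurableSet_Iio)]
    rw [Finset.prod_congr rfl fun j _ => hcdf j t, Finset.prod_const, Finset.card_univ,
      Fintype.card_fin]
  have hmeasInt : ∀ t : ℕ, MeasurableSet (⋂ j ∈ Finset.univ, G j ⁻¹' Set.Iio t) :=
    fun t => MeasurableSet.biInter (Set.to_countable _)
      (fun j _ => hmeas j measurableSet_Iio)
  have hcompl : ∀ t : ℕ,
      {ω | t + 1 ≤ M ω} = (⋂ j ∈ Finset.univ, G j ⁻¹' Set.Iio (t + 1))ᶜ := by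
    intro t
    ext ω
    simp only [Set.mem_setOf_eq, Set.mem_compl_iff, Set.mem_iInter, Set.mem_preimage,
      Set.mem_Iio, Finset.mem_univ, forall_true_left, not_forall, not_lt]
    constructor
    · intro h
      by_contra hc
      push_neg at hc
      have hlt : M ω < t + 1 := Finset.sup_lt_iff t.succ_pos |>.mpr fun j _ => hc j
      omega
    · rintro ⟨j, hj⟩
      calc t + 1 ≤ G j ω := hj
        _ ≤ M ω := Finset.le_sup (f := fun j => G j ω) (Finset.mem_univ j)
  have hA : ∀ t : ℕ, MeasurableSet {ω | t + 1 ≤ M ω} := by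
    intro t
    rw [hcompl t]
    exact (hmeasInt (t + 1)).compl
  have hAmeas : ∀ t : ℕ,
      (μ {ω | t + 1 ≤ M ω}).toReal = 1 - (1 - (2⁻¹ : ℝ) ^ (t + 1)) ^ n := by
    intro t
    have hle1 : (2 : ENNReal)⁻¹ ^ (t + 1) ≤ 1 :=
      pow_le_one' (ENNReal.inv_le_one.mpr one_le_two) _
    have hqle : (1 - (2 : ENNReal)⁻¹ ^ (t + 1)) ^ n ≤ 1 :=
      pow_le_one' tsub_le_self _
    rw [hcompl t, prob_compl_eq_one_sub (hmeasInt (t + 1)), hprod (t + 1),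
      ENNReal.toReal_sub_of_le hqle ENNReal.one_ne_top, ENNReal.toReal_pow,
      ENNReal.toReal_sub_of_le hle1 ENNReal.one_ne_top]
    simp
  -- integrand as a finite sum of indicators
  have hint : ∀ ω, ((min (M ω) i : ℕ) : ℝ)
      = ∑ t ∈ Finset.range i, ({ω' | t + 1 ≤ M ω'}.indicator (fun _ => (1 : ℝ)) ω) := by
    intro ω
    rw [min_eq_sum_aux (M ω) i, Nat.cast_sum]
    refine Finset.sum_congr rfl fun t _ => ?_
    simp only [Set.indicator_apply, Set.mem_setOf_eq]
    split_ifs <;> simp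
  have hB := B_closed B h0 hrec i n hn
  calc B n i = ∑ t ∈ Finset.range i, (1 - (1 - (2⁻¹ : ℝ) ^ (t + 1)) ^ n) := hB
    _ = ∑ t ∈ Finset.range i, (μ {ω | t + 1 ≤ M ω}).toReal :=
        Finset.sum_congr rfl fun t _ => (hAmeas t).symm
    _ = ∫ ω, ((min (M ω) i : ℕ) : ℝ) ∂μ := by
        simp_rw [hint]
        rw [integral_finset_sum _ (fun t _ => (integrable_const (1 : ℝ)).indicator (hA t))]
        refine Finset.sum_congr rfl fun t _ => ?_
        rw [integral_indicator_const _ (hA t)]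
        simp
        rfl
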